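/- arXiv:2111.02729 — 4 statements merged into one kernel-verified Lean document; each statement's English description precedes it below -/
import Mathlib

section
/- For every integer n ≥ 3, there is no group isomorphism between the unitary group U(n,ℂ) and the general linear group GL(n,ℂ); that is, U(n,ℂ) and GL(n,ℂ) are not isomorphic as abstract groups. -/
open Matrix Polynomial

lemma aux_root_mem_spectrum {n : ℕ} (M : Matrix (Fin n) (Fin n) ℂ) {μ : ℂ}
    (h : M.charpoly.IsRoot μ) : μ ∈ spectrum ℂ M := by
  rw [spectrum.mem_iff, Matrix.isUnit_iff_isUnit_det, isUnit_iff_ne_zero, not_not]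
  have key : M.charpoly.eval μ = (algebraMap ℂ (Matrix (Fin n) (Fin n) ℂ) μ - M).det := by
    rw [Matrix.charpoly, eval_det, matPolyEquiv_charmatrix]
    simp [Matrix.scalar, Matrix.algebraMap_eq_diagonal]
  rw [← key]
  exact h

lemma aux_trace_eq_card {n : ℕ} (v : Matrix.unitaryGroup (Fin n) ℂ)
    (htr : Matrix.trace (v : Matrix (Fin n) (Fin n) ℂ) = (n : ℂ)) : v = 1 := by
  set V : Matrix (Fin n) (Fin n) ℂ := (v : Matrix (Fin n) (Fin n) ℂ) with hV
  have hrow : ∀ i, ∑ j, Complex.normSq (V i j) = 1 := by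
    intro i
    have h1 : (V * star V) i i = 1 := by
      rw [v.prop.2]
      simp
    have : ∑ j, (Complex.normSq (V i j) : ℂ) = 1 := by
      rw [← h1, Matrix.mul_apply]
      congr 1
      ext j
      rw [Matrix.star_apply]
      simp [Complex.mul_conj]
    exact_mod_cast this
  have hre_le : ∀ i, (V i i).re ≤ 1 := by
    intro i
    have h2 : Complex.normSq (V i i) ≤ 1 := by
      rw [← hrow i]
      exact Finset.single_le_sum (f := fun j => Complex.normSq (V i j))
        (fun j _ => Complex.normSq_nonneg _) (Finset.mem_univ i)
    have := Complex.re_le_norm (V i i)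
    have habs : ‖V i i‖ ≤ 1 := by
      rw [← Complex.sq_norm] at h2
      nlinarith [norm_nonneg (V i i)]
    linarith
  have hre_sum : ∑ i, (V i i).re = (n : ℝ) := by
    have := congrArg Complex.re htr
    simpa [Matrix.trace, Complex.re_sum] using this
  have hre_eq : ∀ i, (V i i).re = 1 := by
    by_contra hcon
    push_neg at hcon
    obtain ⟨i, hi⟩ := hcon
    have hlt : (V i i).re < 1 := lt_of_le_of_ne (hre_le i) hi
    have : ∑ i, (V i i).re < ∑ _i : Fin n, (1 : ℝ) :=
      Finset.sum_lt_sum (fun j _ => hre_le j) ⟨i, Finset.mem_univ i, hlt⟩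
    simp [hre_sum] at this
  have hdiag : ∀ i, V i i = 1 := by
    intro i
    have h2 : Complex.normSq (V i i) ≤ 1 := by
      rw [← hrow i]
      exact Finset.single_le_sum (f := fun j => Complex.normSq (V i j))
        (fun j _ => Complex.normSq_nonneg _) (Finset.mem_univ i)
    have him : (V i i).im = 0 := by
      have : Complex.normSq (V i i) = 1 + (V i i).im ^ 2 - 1 + 1 := by
        rw [Complex.normSq_apply, hre_eq i]; ring
      nlinarith [sq_nonneg (V i i).im]
    apply Complex.ext
    · simpa using hre_eq i
    · simpa using him
  have hoff : ∀ i j, i ≠ j → V i j = 0 := by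
    intro i j hij
    have h3 : ∑ j ∈ Finset.univ.erase i, Complex.normSq (V i j) = 0 := by
      have := hrow i
      rw [← Finset.add_sum_erase _ _ (Finset.mem_univ i)] at this
      rw [hdiag i] at this
      simpa using this
    have := (Finset.sum_eq_zero_iff_of_nonneg
      (fun k _ => Complex.normSq_nonneg (V i k))).mp h3 j
      (Finset.mem_erase.mpr ⟨hij.symm, Finset.mem_univ j⟩)
    exact Complex.normSq_eq_zero.mp this
  apply Subtype.ext
  ext i j
  by_cases hij : i = j
  · subst hij; rw [show (v : Matrix (Fin n) (Fin n) ℂ) i i = V i i from rfl, hdiag i]; simp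
  · rw [show (v : Matrix (Fin n) (Fin n) ℂ) i j = V i j from rfl, hoff i j hij]
    exact (Matrix.one_apply_ne hij).symm

lemma aux_key {n : ℕ} (u g : Matrix.unitaryGroup (Fin n) ℂ)
    (hc : g * u * g⁻¹ = u ^ 2) : orderOf u ≠ 0 := by
  classical
  set U : Matrix (Fin n) (Fin n) ℂ := (u : Matrix (Fin n) (Fin n) ℂ) with hU
  set S : Set ℂ := spectrum ℂ U with hSdef
  -- spectrum is closed under squaring
  have hconj : (g : Matrix (Fin n) (Fin n) ℂ) * U * star (g : Matrix (Fin n) (Fin n) ℂ)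
      = U ^ 2 := by
    have := congrArg (Subtype.val) hc
    simpa using this
  have hS : (fun z : ℂ => z ^ 2) '' S = S := by
    rw [hSdef, ← spectrum.map_pow_of_pos U (by norm_num : 0 < 2), ← hconj,
      Unitary.spectrum_star_right_conjugate]
  have hfin : S.Finite := Matrix.finite_spectrum U
  have hne : ∀ x ∈ S, x ≠ 0 := by
    intro x hx h0
    subst h0
    exact spectrum.zero_notMem ℂ (Unitary.toUnits u).isUnit hx
  -- every spectral value is a root of unity
  have hroot : ∀ x ∈ S, ∃ m : ℕ, 0 < m ∧ x ^ m = 1 := by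
    intro x hx
    have hpow : ∀ k : ℕ, x ^ (2 ^ k) ∈ S := by
      intro k
      induction k with
      | zero => simpa using hx
      | succ k ih =>
        have : (x ^ (2 ^ k)) ^ 2 ∈ S := by
          rw [← hS]; exact Set.mem_image_of_mem _ ih
        rw [← pow_mul] at this
        rw [pow_succ]
        exact this
    have : Finite S := hfin.to_subtype
    obtain ⟨a, b, hab, heq⟩ := Finite.exists_ne_map_eq_of_infinite
      (fun k : ℕ => (⟨x ^ (2 ^ k), hpow k⟩ : S))
    wlog hlt : a < b generalizing a b
    · exact this b a hab.symm heq.symm (by omega)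
    have heq' : x ^ (2 ^ a) = x ^ (2 ^ b) := congrArg Subtype.val heq
    refine ⟨2 ^ b - 2 ^ a, by
      have := Nat.pow_lt_pow_right (by norm_num : 1 < 2) hlt
      omega, ?_⟩
    have hx0 : x ≠ 0 := hne x hx
    rw [pow_sub₀ x hx0 (Nat.pow_le_pow_right (by norm_num) hlt.le), ← heq',
      mul_inv_cancel₀ (pow_ne_zero _ hx0)]
  -- a common exponent
  set m : ℂ → ℕ := fun x => if hx : x ∈ S then (hroot x hx).choose else 1 with hm
  set N : ℕ := ∏ x ∈ hfin.toFinset, m x with hN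
  have hNpos : 0 < N := by
    apply Finset.prod_pos
    intro x hx
    rw [Set.Finite.mem_toFinset] at hx
    simp only [hm, dif_pos hx]
    exact (hroot x hx).choose_spec.1
  have hNone : ∀ x ∈ S, x ^ N = 1 := by
    intro x hx
    have hdvd : m x ∣ N := Finset.dvd_prod_of_mem m (hfin.mem_toFinset.mpr hx)
    obtain ⟨k, hk⟩ := hdvd
    have hxm : x ^ m x = 1 := by
      simp only [hm, dif_pos hx]
      exact (hroot x hx).choose_spec.2
    rw [hk, pow_mul, hxm, one_pow]
  -- u ^ N = 1
  have hvspec : ∀ μ ∈ spectrum ℂ (U ^ N), μ = 1 := by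
    rw [spectrum.map_pow_of_pos U hNpos]
    rintro μ ⟨x, hx, rfl⟩
    exact hNone x hx
  set v : Matrix.unitaryGroup (Fin n) ℂ := u ^ N with hv
  have hvU : (v : Matrix (Fin n) (Fin n) ℂ) = U ^ N := by
    simp [hv, hU]
  have hcharroots : ∀ μ ∈ (U ^ N).charpoly.roots, μ = 1 := by
    intro μ hμ
    exact hvspec μ (aux_root_mem_spectrum _ (isRoot_of_mem_roots hμ))
  have hsplits : (U ^ N).charpoly.Splits := IsAlgClosed.splits _
  have hcard : (U ^ N).charpoly.roots.card = n := by
    have h1 := hsplits.natDegree_eq_card_roots.symm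
    rw [h1, Matrix.charpoly_natDegree_eq_dim, Fintype.card_fin]
  have htr : Matrix.trace (U ^ N) = (n : ℂ) := by
    have hrep := Multiset.eq_replicate_of_mem hcharroots
    rw [Matrix.trace_eq_sum_roots_charpoly, hrep, hcard]
    simp
  have hv1 : v = 1 := aux_trace_eq_card v (by rw [hvU]; exact htr)
  rw [hv] at hv1
  intro h0
  exact orderOf_eq_zero_iff'.mp h0 N hNpos hv1

lemma aux_gl {n : ℕ} (hn : 3 ≤ n) :
    ∃ J g : GL (Fin n) ℂ, g * J * g⁻¹ = J ^ 2 ∧ orderOf J = 0 := by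
  classical
  have h0 : 0 < n := by omega
  have h1 : 1 < n := by omega
  set i0 : Fin n := ⟨0, h0⟩ with hi0
  set i1 : Fin n := ⟨1, h1⟩ with hi1
  have hne : i0 ≠ i1 := by simp [hi0, hi1, Fin.ext_iff]
  set E : Matrix (Fin n) (Fin n) ℂ := single i0 i1 1 with hE
  have hEapply : ∀ a b, E a b = if i0 = a ∧ i1 = b then 1 else 0 := fun a b => rfl
  have hE2 : E * E = 0 := Matrix.single_mul_single_of_ne _ _ _ _ hne.symm _
  have hTmul : (1 + E) * (1 - E) = 1 := by
    have h : (1 + E) * (1 - E) = 1 - E * E := by noncomm_ring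
    rw [h, hE2, sub_zero]
  have hTmul' : (1 - E) * (1 + E) = 1 := by
    have h : (1 - E) * (1 + E) = 1 - E * E := by noncomm_ring
    rw [h, hE2, sub_zero]
  set J : GL (Fin n) ℂ := ⟨1 + E, 1 - E, hTmul, hTmul'⟩ with hJ
  set d : Fin n → ℂ := fun i => if i = i0 then 2 else 1 with hd
  set d' : Fin n → ℂ := fun i => if i = i0 then (2:ℂ)⁻¹ else 1 with hd'
  have hdd : ∀ i, d i * d' i = 1 := by
    intro i
    by_cases h : i = i0 <;> norm_num [hd, hd', h]
  have hdd' : ∀ i, d' i * d i = 1 := by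
    intro i
    by_cases h : i = i0 <;> norm_num [hd, hd', h]
  have hDmul : diagonal d * diagonal d' = 1 := by
    rw [diagonal_mul_diagonal, show (fun i => d i * d' i) = fun _ => (1:ℂ) from funext hdd,
      diagonal_one]
  have hDmul' : diagonal d' * diagonal d = 1 := by
    rw [diagonal_mul_diagonal, show (fun i => d' i * d i) = fun _ => (1:ℂ) from funext hdd',
      diagonal_one]
  set g : GL (Fin n) ℂ := ⟨diagonal d, diagonal d', hDmul, hDmul'⟩ with hg
  have hDE : diagonal d * E = E + E := by
    ext i j
    rw [Matrix.add_apply, diagonal_mul, hEapply]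
    by_cases h : i0 = i ∧ i1 = j
    · rw [if_pos h, ← h.1]
      norm_num [hd]
    · rw [if_neg h]
      simp
  have hED : E * diagonal d = E := by
    ext i j
    rw [mul_diagonal, hEapply]
    by_cases h : i0 = i ∧ i1 = j
    · rw [if_pos h, ← h.2, one_mul]
      show (if i1 = i0 then (2:ℂ) else 1) = 1
      rw [if_neg (by simp [hi0, hi1, Fin.ext_iff])]
    · rw [if_neg h, zero_mul]
  have hmain : diagonal d * (1 + E) = ((1 + E) * (1 + E)) * diagonal d := by
    have h : ((1 + E) * (1 + E)) * diagonal d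
        = diagonal d + (E * diagonal d + E * diagonal d) + (E * E) * diagonal d := by
      noncomm_ring
    rw [h, hE2, zero_mul, add_zero, hED, mul_add, mul_one, hDE]
  refine ⟨J, g, ?_, ?_⟩
  · rw [mul_inv_eq_iff_eq_mul, Units.ext_iff]
    have hl : ((g * J : GL (Fin n) ℂ) : Matrix (Fin n) (Fin n) ℂ) = diagonal d * (1 + E) := rfl
    have hr : ((J ^ 2 * g : GL (Fin n) ℂ) : Matrix (Fin n) (Fin n) ℂ)
        = ((1 + E) * (1 + E)) * diagonal d := by
      rw [Units.val_mul, Units.val_pow_eq_pow_val, sq]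
    rw [hl, hr]
    exact hmain
  · have hpow : ∀ k : ℕ, (J ^ k : GL (Fin n) ℂ).val = 1 + (k : ℂ) • E := by
      intro k
      induction k with
      | zero => simp
      | succ k ih =>
        rw [pow_succ, Units.val_mul, ih]
        have hJval : (J : Matrix (Fin n) (Fin n) ℂ) = 1 + E := rfl
        rw [hJval]
        push_cast
        rw [add_smul, one_smul]
        have h : (1 + (k : ℂ) • E) * (1 + E)
            = 1 + ((k : ℂ) • E + E) + (k : ℂ) • (E * E) := by noncomm_ring
        rw [h, hE2, smul_zero, add_zero]
    rw [orderOf_eq_zero_iff']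
    intro k hk hJk
    have hmat : (1 : Matrix (Fin n) (Fin n) ℂ) + (k : ℂ) • E = 1 := by
      rw [← hpow k, hJk, Units.val_one]
    have h01 := congrFun (congrFun hmat i0) i1
    rw [Matrix.add_apply, Matrix.smul_apply, hEapply, if_pos ⟨rfl, rfl⟩,
      Matrix.one_apply_ne hne] at h01
    simp only [smul_eq_mul, mul_one, zero_add] at h01
    exact hk.ne' (by exact_mod_cast h01)

/-- For every integer `n ≥ 3`, there is no group isomorphism between `U(n, ℂ)` and
`GL(n, ℂ)`: they are not isomorphic as abstract groups. -/
theorem stmt_7 (n : ℕ) (hn : 3 ≤ n) :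
    IsEmpty (Matrix.unitaryGroup (Fin n) ℂ ≃* GL (Fin n) ℂ) := by
  constructor
  intro e
  obtain ⟨J, g, hc, hord⟩ := aux_gl hn
  have hc' : e.symm g * e.symm J * (e.symm g)⁻¹ = e.symm J ^ 2 := by
    rw [← _root_.map_inv, ← _root_.map_mul, ← _root_.map_mul, ← map_pow, hc]
  have h1 : orderOf (e.symm J) ≠ 0 := aux_key (e.symm J) (e.symm g) hc'
  have h2 : orderOf (e.symm J) = orderOf J :=
    orderOf_injective e.symm.toMonoidHom e.symm.injective J
  exact h1 (h2.trans hord)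
end

section
/- For every v in the special unitary group SU(3,ℂ), there exists w ∈ SU(3,ℂ) such that w commutes with v, w is not a scalar matrix, and w² = I. Consequently, for every v ∈ SU(3,ℂ), the quotient of the centralizer of v in SU(3,ℂ) by the center of SU(3,ℂ) is not torsion-free. -/
open Matrix

lemma aux_vecMulVec_mul (n : Type*) [Fintype n] (u w : n → ℂ) (M : Matrix n n ℂ) :
    vecMulVec u w * M = vecMulVec u (w ᵥ* M) := by
  ext i j
  simp [Matrix.mul_apply, Matrix.vecMulVec_apply, Matrix.vecMul, dotProduct,
    Finset.mul_sum, mul_assoc]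

lemma aux_mul_vecMulVec (n : Type*) [Fintype n] (M : Matrix n n ℂ) (u w : n → ℂ) :
    M * vecMulVec u w = vecMulVec (M *ᵥ u) w := by
  ext i j
  simp [Matrix.mul_apply, Matrix.vecMulVec_apply, Matrix.mulVec, dotProduct,
    Finset.sum_mul, mul_assoc]

lemma aux_vecMulVec_mul_vecMulVec (n : Type*) [Fintype n] (u w u' w' : n → ℂ) :
    vecMulVec u w * vecMulVec u' w' = (w ⬝ᵥ u') • vecMulVec u w' := by
  rw [aux_vecMulVec_mul]
  ext i j
  simp [Matrix.vecMulVec_apply, Matrix.vecMul, dotProduct, Finset.sum_mul,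
    Finset.mul_sum]
  exact Finset.sum_congr rfl fun k _ => by ring

/-- For every `v ∈ SU(3, ℂ)` there exists `w ∈ SU(3, ℂ)` commuting with `v` such that `w`
is not a scalar matrix and `w ^ 2 = 1`. Consequently the centralizer of `v` in `SU(3, ℂ)`
modulo the center of `SU(3, ℂ)` is not torsion-free. -/
theorem stmt_12 (v : Matrix.specialUnitaryGroup (Fin 3) ℂ) :
    ∃ w : Matrix.specialUnitaryGroup (Fin 3) ℂ,
      w * v = v * w ∧
      (¬ ∃ lam : ℂ, (w : Matrix (Fin 3) (Fin 3) ℂ) = lam • 1) ∧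
      w ^ 2 = 1 := by
  obtain ⟨hvU, hvdet⟩ := Matrix.mem_specialUnitaryGroup_iff.mp v.2
  set V : Matrix (Fin 3) (Fin 3) ℂ := (v : Matrix (Fin 3) (Fin 3) ℂ) with hV
  have hVU : Vᴴ * V = 1 := by
    rw [← Matrix.star_eq_conjTranspose]
    exact Matrix.mem_unitaryGroup_iff'.mp hvU
  -- eigenvector
  obtain ⟨μ, hμ⟩ := Module.End.exists_eigenvalue (Matrix.mulVecLin V)
  obtain ⟨x, hx⟩ := hμ.exists_hasEigenvector
  have hx0 : x ≠ 0 := hx.right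
  have hVx : V *ᵥ x = μ • x := hx.apply_eq_smul
  -- normalize
  set t : ℝ := ∑ i, Complex.normSq (x i) with ht
  have htpos : 0 < t := by
    obtain ⟨i, hi⟩ : ∃ i, x i ≠ 0 := by
      by_contra h; push_neg at h; exact hx0 (funext h)
    exact Finset.sum_pos' (fun j _ => Complex.normSq_nonneg _)
      ⟨i, Finset.mem_univ i, Complex.normSq_pos.mpr hi⟩
  set s : ℂ := ((Real.sqrt t : ℝ) : ℂ) with hs
  have hs0 : s ≠ 0 := by
    simp [hs, Complex.ofReal_eq_zero, Real.sqrt_eq_zero', not_le, htpos]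
  have hss : s * s = (t : ℂ) := by
    rw [hs, ← Complex.ofReal_mul, Real.mul_self_sqrt htpos.le]
  set u : Fin 3 → ℂ := s⁻¹ • x with hu
  have hxx : star x ⬝ᵥ x = (t : ℂ) := by
    simp only [dotProduct, Pi.star_apply, ht, Complex.ofReal_sum]
    exact Finset.sum_congr rfl fun i _ => (Complex.normSq_eq_conj_mul_self).symm
  have hsu : star u ⬝ᵥ u = 1 := by
    have hstar : star u = s⁻¹ • star x := by
      rw [hu, star_smul]
      congr 1
      simp [hs, RCLike.star_def]
    rw [hu, hstar, smul_dotProduct, dotProduct_smul, hxx, smul_eq_mul,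
      smul_eq_mul, ← mul_assoc, ← mul_inv, hss]
    field_simp
    exact div_self (by exact_mod_cast htpos.ne')
  have hVu : V *ᵥ u = μ • u := by
    rw [hu, Matrix.mulVec_smul, hVx, smul_comm]
  -- |μ| = 1
  have hμ1 : (starRingEnd ℂ) μ * μ = 1 := by
    have h1 : star (V *ᵥ u) ⬝ᵥ (V *ᵥ u) = 1 := by
      rw [Matrix.star_mulVec, Matrix.dotProduct_mulVec, Matrix.vecMul_vecMul, hVU,
        Matrix.vecMul_one, hsu]
    rw [hVu, star_smul, smul_dotProduct, dotProduct_smul, hsu] at h1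
    simpa using h1
  have hVHu : Vᴴ *ᵥ u = (starRingEnd ℂ) μ • u := by
    have : Vᴴ *ᵥ (V *ᵥ u) = u := by
      rw [Matrix.mulVec_mulVec, hVU, Matrix.one_mulVec]
    rw [hVu, Matrix.mulVec_smul] at this
    calc Vᴴ *ᵥ u = ((starRingEnd ℂ) μ * μ) • (Vᴴ *ᵥ u) := by rw [hμ1, one_smul]
    _ = (starRingEnd ℂ) μ • (μ • (Vᴴ *ᵥ u)) := mul_smul _ _ _
    _ = (starRingEnd ℂ) μ • u := by rw [this]
  have huV : star u ᵥ* V = μ • star u := by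
    have h1 : star (Vᴴ *ᵥ u) = star u ᵥ* V := by
      rw [Matrix.star_mulVec, Matrix.conjTranspose_conjTranspose]
    rw [hVHu, star_smul] at h1
    simpa using h1.symm
  -- the matrix W
  set P : Matrix (Fin 3) (Fin 3) ℂ := vecMulVec u (star u) with hP
  set W : Matrix (Fin 3) (Fin 3) ℂ := (2 : ℂ) • P - 1 with hW
  have hPP : P * P = P := by
    rw [hP, aux_vecMulVec_mul_vecMulVec, hsu, one_smul]
  have hPH : Pᴴ = P := by
    ext i j
    simp [hP, Matrix.conjTranspose_apply, Matrix.vecMulVec_apply, mul_comm]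
  have hWH : Wᴴ = W := by
    rw [hW, Matrix.conjTranspose_sub, Matrix.conjTranspose_smul, hPH,
      Matrix.conjTranspose_one]
    norm_num
  have hWW : W * W = 1 := by
    rw [hW]
    rw [sub_mul, mul_sub, mul_sub, Matrix.smul_mul, Matrix.mul_smul, smul_smul, hPP,
      Matrix.one_mul, Matrix.mul_one]
    rw [sub_sub_sub_comm]
    norm_num
    rw [show ((4:ℂ) • P - (2:ℂ) • P : Matrix (Fin 3) (Fin 3) ℂ) = (2:ℂ) • P by
      rw [← sub_smul]; norm_num]
    simp
  have hdet : W.det = 1 := by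
    have hWeq : W = -(1 + Matrix.replicateCol Unit ((-2 : ℂ) • u) * Matrix.replicateRow Unit (star u)) := by
      rw [← Matrix.vecMulVec_eq]
      ext i j
      simp [hW, hP, Matrix.vecMulVec_apply, Matrix.one_apply]
      by_cases h : i = j <;> simp [h] <;> ring
    rw [hWeq, Matrix.det_neg, Matrix.det_one_add_replicateCol_mul_replicateRow, dotProduct_smul, hsu]
    norm_num [Fintype.card_fin]
  have hWmem : W ∈ Matrix.specialUnitaryGroup (Fin 3) ℂ := by
    rw [Matrix.mem_specialUnitaryGroup_iff]
    refine ⟨Matrix.mem_unitaryGroup_iff'.mpr ?_, hdet⟩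
    rw [Matrix.star_eq_conjTranspose, hWH, hWW]
  -- commutation
  have hcomm : W * V = V * W := by
    rw [hW, sub_mul, mul_sub, Matrix.one_mul, Matrix.mul_one, Matrix.smul_mul,
      Matrix.mul_smul, hP, aux_vecMulVec_mul, aux_mul_vecMulVec, huV, hVu]
    congr 2
    ext i j
    simp [Matrix.vecMulVec_apply]
    ring
  refine ⟨⟨W, hWmem⟩, ?_, ?_, ?_⟩
  · exact Subtype.ext hcomm
  · rintro ⟨lam, hl⟩
    have hl' : W = lam • 1 := hl
    have htr : W.trace = -1 := by
      rw [hW, Matrix.trace_sub, Matrix.trace_smul, Matrix.trace_one]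
      have : P.trace = 1 := by
        rw [hP, Matrix.trace]
        have : ∀ i, Matrix.diag (vecMulVec u (star u)) i = star (u i) * u i := by
          intro i; simp [Matrix.vecMulVec_apply, mul_comm]
        rw [Finset.sum_congr rfl fun i _ => this i]
        exact hsu
      rw [this]
      norm_num [Fintype.card_fin]
    rw [hl'] at htr hWW
    have h3 : lam * 3 = -1 := by
      rw [Matrix.trace_smul, Matrix.trace_one] at htr
      simpa [Fintype.card_fin] using htr
    have h2 : lam * lam = 1 := by
      have := congrFun (congrFun hWW 0) 0
      simpa [Matrix.smul_mul, Matrix.mul_smul, smul_smul, Matrix.one_apply] using this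
    have : lam = -1/3 := by linear_combination h3 / 3
    rw [this] at h2
    norm_num at h2
  · apply Subtype.ext
    rw [SubmonoidClass.coe_pow, sq]
    exact hWW
end

section
/- There is no group isomorphism between the special unitary group SU(3,ℂ) and the special linear group SL(3,ℂ); that is, SU(3,ℂ) and SL(3,ℂ) are not isomorphic even as abstract groups (ignoring all topological and geometric structure). -/
open Polynomial Matrix


noncomputable def uMat : Matrix (Fin 3) (Fin 3) ℂ := !![1,1,0;0,1,0;0,0,1]
noncomputable def hMat : Matrix (Fin 3) (Fin 3) ℂ := !![2,0,0;0,1,0;0,0,2⁻¹]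

lemma uMat_det : uMat.det = 1 := by simp [uMat, Matrix.det_fin_three]
lemma hMat_det : hMat.det = 1 := by simp [hMat, Matrix.det_fin_three]

noncomputable def uSL : Matrix.SpecialLinearGroup (Fin 3) ℂ := ⟨uMat, uMat_det⟩
noncomputable def hSL : Matrix.SpecialLinearGroup (Fin 3) ℂ := ⟨hMat, hMat_det⟩

lemma uMat_pow (n : ℕ) : uMat ^ n = !![1,(n:ℂ),0;0,1,0;0,0,1] := by
  induction n with
  | zero => simp [Matrix.one_fin_three]
  | succ n ih =>
    rw [pow_succ, ih, uMat]
    norm_num [Matrix.mul_fin_three]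
    ring_nf

lemma key_rel : hSL * uSL = uSL ^ 2 * hSL := by
  apply Subtype.ext
  push_cast [uSL, hSL]
  show hMat * uMat = uMat ^ 2 * hMat
  rw [pow_two]
  norm_num [uMat, hMat, Matrix.mul_fin_three]

lemma uSL_pow_ne_one (n : ℕ) (hn : 0 < n) : uSL ^ n ≠ 1 := by
  intro h
  have h2 : (uSL ^ n : Matrix.SpecialLinearGroup (Fin 3) ℂ).val = 1 := by rw [h]; rfl
  rw [show (uSL ^ n).val = uMat ^ n from rfl, uMat_pow] at h2
  have := congrFun (congrFun h2 0) 1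
  simp [Matrix.one_fin_three] at this
  exact hn.ne' (by simpa using this)

lemma root_mem_spec (A : Matrix (Fin 3) (Fin 3) ℂ) (ζ : ℂ)
    (h : (Matrix.charpoly A).IsRoot ζ) : ζ ∈ spectrum ℂ A := by
  rw [spectrum.mem_iff]
  intro hU
  have hdet : (algebraMap ℂ (Matrix (Fin 3) (Fin 3) ℂ) ζ - A).det = 0 := by
    have hmap : (charmatrix A).map (evalRingHom ζ) =
        algebraMap ℂ (Matrix (Fin 3) (Fin 3) ℂ) ζ - A := by
      ext i j
      by_cases hij : i = j <;>
        simp [charmatrix_apply, Matrix.algebraMap_matrix_apply, hij, diagonal_apply]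
    have h2 := RingHom.map_det (evalRingHom ζ) (charmatrix A)
    rw [RingHom.mapMatrix_apply, hmap] at h2
    rw [← h2]
    simpa [Matrix.charpoly, IsRoot.def] using h
  have h3 := hU.map (Matrix.detMonoidHom (n := Fin 3) (R := ℂ))
  rw [Matrix.coe_detMonoidHom] at h3
  simp [hdet] at h3

lemma unitary_unipotent_eq_one (U : Matrix (Fin 3) (Fin 3) ℂ)
    (hU : star U * U = 1) (h3 : (U - 1) ^ 3 = 0) : U = 1 := by
  obtain ⟨M, hM⟩ : ∃ M, M = U - 1 := ⟨U - 1, rfl⟩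
  rw [← hM] at h3
  have hUM : U = 1 + M := by rw [hM]; abel
  have hinv : U * (1 - M + M ^ 2) = 1 := by
    rw [hUM]
    have : (1 + M) * (1 - M + M ^ 2) = 1 + M ^ 3 := by noncomm_ring
    rw [this, h3, add_zero]
  have hstarU : star U = 1 - M + M ^ 2 := by
    calc star U = star U * (U * (1 - M + M ^ 2)) := by rw [hinv, mul_one]
    _ = (star U * U) * (1 - M + M ^ 2) := by rw [mul_assoc]
    _ = 1 - M + M ^ 2 := by rw [hU, one_mul]
  have hstarM : star M = - M + M ^ 2 := by
    have : star M = star U - 1 := by rw [hM]; simp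
    rw [this, hstarU]; abel
  have htr : Matrix.trace (Mᴴ * M) = 0 := by
    have hMH : Mᴴ = star M := rfl
    rw [hMH, hstarM]
    have hM4 : M ^ 2 * M = 0 := by rw [← pow_succ, h3]
    have hexp : (-M + M ^ 2) * M = -(M * M) + M ^ 2 * M := by noncomm_ring
    rw [hexp, hM4, add_zero, Matrix.trace_neg]
    have hnil : IsNilpotent (M * M) := ⟨2, by
      have : (M * M) ^ 2 = M ^ 3 * M := by noncomm_ring
      rw [this, h3, zero_mul]⟩
    rw [(Matrix.isNilpotent_trace_of_isNilpotent hnil).eq_zero, neg_zero]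
  have hM0 : M = 0 := by
    have hexp : Matrix.trace (Mᴴ * M) =
        ((∑ j : Fin 3, ∑ i : Fin 3, Complex.normSq (M i j) : ℝ) : ℂ) := by
      rw [Matrix.trace]
      push_cast
      refine Finset.sum_congr rfl fun j _ => ?_
      rw [Matrix.diag_apply, Matrix.mul_apply]
      refine Finset.sum_congr rfl fun i _ => ?_
      rw [Matrix.conjTranspose_apply, Complex.normSq_eq_conj_mul_self]
      rfl
    rw [hexp] at htr
    have hreal : (∑ j : Fin 3, ∑ i : Fin 3, Complex.normSq (M i j)) = 0 :=
      Complex.ofReal_eq_zero.mp htr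
    ext i j
    have hnn : ∀ j ∈ Finset.univ, (0:ℝ) ≤ ∑ i : Fin 3, Complex.normSq (M i j) :=
      fun j _ => Finset.sum_nonneg fun i _ => Complex.normSq_nonneg _
    have h1 := (Finset.sum_eq_zero_iff_of_nonneg hnn).mp hreal j (Finset.mem_univ j)
    have h2 := (Finset.sum_eq_zero_iff_of_nonneg
      (fun i _ => Complex.normSq_nonneg (M i j))).mp h1 i (Finset.mem_univ i)
    simpa using Complex.normSq_eq_zero.mp h2
  rw [hM] at hM0
  exact sub_eq_zero.mp hM0

lemma su_finite_order (g k : Matrix.specialUnitaryGroup (Fin 3) ℂ)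
    (hc : k * g = g ^ 2 * k) :
    ∃ N : ℕ, 0 < N ∧ ((g : Matrix (Fin 3) (Fin 3) ℂ)) ^ N = 1 := by
  set G : Matrix (Fin 3) (Fin 3) ℂ := (g : Matrix (Fin 3) (Fin 3) ℂ) with hG
  set K : Matrix (Fin 3) (Fin 3) ℂ := (k : Matrix (Fin 3) (Fin 3) ℂ) with hK
  have h1 : K * G = G ^ 2 * K := by
    have := congrArg Subtype.val hc
    simpa [hG, hK] using this
  have hkk : K * star K = 1 :=
    Matrix.mem_unitaryGroup_iff.mp ((Matrix.mem_specialUnitaryGroup_iff.mp k.2).1)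
  have hkk' : star K * K = 1 :=
    Matrix.mem_unitaryGroup_iff'.mp ((Matrix.mem_specialUnitaryGroup_iff.mp k.2).1)
  have hdet : G.det = 1 := (Matrix.mem_specialUnitaryGroup_iff.mp g.2).2
  have hGunit : IsUnit G := by
    rw [Matrix.isUnit_iff_isUnit_det, hdet]; exact isUnit_one
  have hconj : G ^ 2 = K * G * star K := by
    calc G ^ 2 = G ^ 2 * (K * star K) := by rw [hkk, mul_one]
    _ = (G ^ 2 * K) * star K := by rw [mul_assoc]
    _ = (K * G) * star K := by rw [h1]
  have hsq : ∀ μ ∈ spectrum ℂ G, μ ^ 2 ∈ spectrum ℂ G := by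
    intro μ hμ
    have h2 : μ ^ 2 ∈ spectrum ℂ (G ^ 2) :=
      spectrum.pow_image_subset G 2 ⟨μ, hμ, rfl⟩
    rw [hconj] at h2
    have h3 : spectrum ℂ ((⟨K, star K, hkk, hkk'⟩ : (Matrix (Fin 3) (Fin 3) ℂ)ˣ) * G *
        (⟨K, star K, hkk, hkk'⟩ : (Matrix (Fin 3) (Fin 3) ℂ)ˣ)⁻¹) = spectrum ℂ G :=
      spectrum.units_conjugate
    rw [← h3]
    exact h2
  have hroot : ∀ μ ∈ spectrum ℂ G, ∃ m : ℕ, 0 < m ∧ μ ^ m = 1 := by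
    intro μ hμ
    have hμ0 : μ ≠ 0 := by
      intro h0
      rw [h0] at hμ
      exact (spectrum.zero_notMem_iff ℂ).mpr hGunit hμ
    have key : ∀ a b : ℕ, a < b → μ ^ (2 ^ a) = μ ^ (2 ^ b) →
        ∃ m : ℕ, 0 < m ∧ μ ^ m = 1 := by
      intro a b hlt heq'
      refine ⟨2 ^ b - 2 ^ a, ?_, ?_⟩
      · have := Nat.pow_lt_pow_right (a := 2) one_lt_two hlt
        omega
      · have hsplit : μ ^ (2 ^ b) = μ ^ (2 ^ a) * μ ^ (2 ^ b - 2 ^ a) := by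
          rw [← pow_add]
          congr 1
          have := (Nat.pow_lt_pow_right (a := 2) one_lt_two hlt).le
          omega
        have h5 : μ ^ (2 ^ a) * 1 = μ ^ (2 ^ a) * μ ^ (2 ^ b - 2 ^ a) := by
          rw [mul_one]; exact heq'.trans hsplit
        exact (mul_left_cancel₀ (pow_ne_zero _ hμ0) h5).symm
    have hf : ∀ n : ℕ, μ ^ (2 ^ n) ∈ spectrum ℂ G := by
      intro n
      induction n with
      | zero => simpa using hμ
      | succ n ih =>
        have : μ ^ (2 ^ (n + 1)) = (μ ^ (2 ^ n)) ^ 2 := by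
          rw [← pow_mul, pow_succ]
        rw [this]
        exact hsq _ ih
    haveI : Finite (spectrum ℂ G) := Matrix.instFiniteSpectrum G
    obtain ⟨a, b, hab, heq⟩ := Finite.exists_ne_map_eq_of_infinite
      (fun n : ℕ => (⟨μ ^ (2 ^ n), hf n⟩ : spectrum ℂ G))
    have heq' : μ ^ (2 ^ a) = μ ^ (2 ^ b) := congrArg Subtype.val heq
    rcases hab.lt_or_gt with hlt | hlt
    · exact key a b hlt heq'
    · exact key b a hlt heq'.symm
  -- choose a uniform exponent N
  have hfin : (spectrum ℂ G).Finite := Matrix.finite_spectrum G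
  classical
  set m : ℂ → ℕ := fun μ => if hμ : μ ∈ spectrum ℂ G then (hroot μ hμ).choose else 1 with hm
  have hm_pos : ∀ μ, 0 < m μ := by
    intro μ
    rw [hm]
    by_cases hμ : μ ∈ spectrum ℂ G
    · simp only [hμ, dif_pos]
      exact (hroot μ hμ).choose_spec.1
    · simp [hμ]
  have hm_pow : ∀ μ ∈ spectrum ℂ G, μ ^ (m μ) = 1 := by
    intro μ hμ
    rw [hm]
    simp only [hμ, dif_pos]
    exact (hroot μ hμ).choose_spec.2
  set N : ℕ := ∏ μ ∈ hfin.toFinset, m μ with hN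
  have hN_pos : 0 < N := Finset.prod_pos fun μ _ => hm_pos μ
  have hN_pow : ∀ μ ∈ spectrum ℂ G, μ ^ N = 1 := by
    intro μ hμ
    obtain ⟨c, hc'⟩ := Finset.dvd_prod_of_mem m (hfin.mem_toFinset.mpr hμ)
    rw [hN, hc', pow_mul, hm_pow μ hμ, one_pow]
  refine ⟨N, hN_pos, ?_⟩
  -- charpoly argument
  have hsplits : (Matrix.charpoly G).Splits := IsAlgClosed.splits _
  have hmonic := Matrix.charpoly_monic G
  have hcard : (Matrix.charpoly G).roots.card = 3 := by
    rw [(Polynomial.splits_iff_card_roots).mp hsplits, Matrix.charpoly_natDegree_eq_dim]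
    simp
  have hfact : Matrix.charpoly G =
      ((Matrix.charpoly G).roots.map fun ζ => X - C ζ).prod :=
    hsplits.eq_prod_roots_of_monic hmonic
  have hdvd : Matrix.charpoly G ∣ (X ^ N - 1 : ℂ[X]) ^ 3 := by
    rw [hfact]
    have h6 : (((Matrix.charpoly G).roots.map fun ζ => X - C ζ).prod : ℂ[X]) ∣
        ((Matrix.charpoly G).roots.map fun _ => (X ^ N - 1 : ℂ[X])).prod := by
      apply Multiset.prod_dvd_prod_of_dvd
      intro ζ hζ
      rw [Polynomial.dvd_iff_isRoot]
      have hζs : ζ ∈ spectrum ℂ G :=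
        root_mem_spec _ _ (Polynomial.isRoot_of_mem_roots hζ)
      simp [Polynomial.IsRoot.def, hN_pow ζ hζs]
    refine h6.trans ?_
    rw [Multiset.map_const', Multiset.prod_replicate, hcard]
  obtain ⟨q, hq⟩ := hdvd
  have hCH : aeval G (Matrix.charpoly G) = 0 := Matrix.aeval_self_charpoly G
  have h7 : (G ^ N - 1) ^ 3 = 0 := by
    have := congrArg (aeval G) hq
    rw [_root_.map_mul, hCH, zero_mul] at this
    simpa using this
  have hcoe : ((g ^ N : Matrix.specialUnitaryGroup (Fin 3) ℂ) : Matrix (Fin 3) (Fin 3) ℂ)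
      = G ^ N := SubmonoidClass.coe_pow g N
  have hUuni : star (G ^ N) * (G ^ N) = 1 := by
    rw [← hcoe]
    exact Matrix.mem_unitaryGroup_iff'.mp
      ((Matrix.mem_specialUnitaryGroup_iff.mp (g ^ N).2).1)
  exact unitary_unipotent_eq_one _ hUuni h7

/-- There is no group isomorphism between `SU(3, ℂ)` and `SL(3, ℂ)`: they are not
isomorphic even as abstract groups. -/
theorem stmt_13 :
    IsEmpty (Matrix.specialUnitaryGroup (Fin 3) ℂ ≃* Matrix.SpecialLinearGroup (Fin 3) ℂ) := by
  constructor
  intro φ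
  set g := φ.symm uSL with hg
  set k := φ.symm hSL with hk
  have hc : k * g = g ^ 2 * k := by
    rw [hg, hk, ← _root_.map_mul, ← map_pow, ← _root_.map_mul, key_rel]
  obtain ⟨N, hN, hgN⟩ := su_finite_order g k hc
  have hgN1 : g ^ N = 1 := by
    apply Subtype.ext
    rw [SubmonoidClass.coe_pow, hgN]
    rfl
  have : uSL ^ N = 1 := by
    have := congrArg φ hgN1
    rw [map_pow, _root_.map_one, hg, MulEquiv.apply_symm_apply] at this
    exact this
  exact uSL_pow_ne_one N hN this
end

section
/- For every integer n ≥ 3, there is no group isomorphism between the special unitary group SU(n,ℂ) and the special linear group SL(n,ℂ); that is, SU(n,ℂ) and SL(n,ℂ) are not isomorphic as abstract groups. -/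
open Polynomial Matrix
open scoped ComplexOrder

lemma normal_nilpotent_eq_zero {m : ℕ} {M : Matrix (Fin m) (Fin m) ℂ}
    (hM : Commute M (star M)) {j : ℕ} (_hj0 : 0 < j) (hj : M ^ j = 0) : M = 0 := by
  set h : Matrix (Fin m) (Fin m) ℂ := star M * M with hh
  have hherm : star h = h := by
    simp [hh, StarMul.star_mul]

  have hpow : h ^ j = 0 := by
    rw [hh, (hM.symm).mul_pow, hj, mul_zero]
  have key : ∀ k : ℕ, h ^ (2 ^ k) = 0 → h = 0 := by
    intro k
    induction k with
    | zero => simp only [pow_zero, pow_one]; exact id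
    | succ k ih =>
      intro hk
      apply ih
      have hst : (h ^ 2 ^ k)ᴴ = h ^ 2 ^ k := by
        rw [← Matrix.star_eq_conjTranspose, star_pow, hherm]
      have h2 : h ^ (2 ^ (k+1)) = (h ^ (2 ^ k))ᴴ * h ^ (2 ^ k) := by
        rw [hst, ← pow_add]
        ring_nf
      rw [h2] at hk
      exact Matrix.conjTranspose_mul_self_eq_zero.mp hk
  have h2k : h ^ (2 ^ j) = 0 := by
    have hle : j ≤ 2 ^ j := Nat.le_of_lt (Nat.lt_two_pow_self (n := j))
    calc h ^ (2 ^ j) = h ^ j * h ^ (2 ^ j - j) := by rw [← pow_add]; congr 1; omega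
    _ = 0 := by rw [hpow, zero_mul]
  have hz : h = 0 := key j h2k
  have : Mᴴ * M = 0 := by rw [← Matrix.star_eq_conjTranspose, ← hh, hz]
  exact Matrix.conjTranspose_mul_self_eq_zero.mp this

lemma eval_charpoly' {m : ℕ} (A : Matrix (Fin m) (Fin m) ℂ) (μ : ℂ) :
    A.charpoly.eval μ = (algebraMap ℂ (Matrix (Fin m) (Fin m) ℂ) μ - A).det := by
  rw [Matrix.charpoly, ← Polynomial.coe_evalRingHom, RingHom.map_det]
  congr 1
  ext i j
  by_cases h : i = j
  · subst h
    simp [Matrix.charmatrix_apply_eq, Matrix.algebraMap_matrix_apply]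
  · simp [Matrix.charmatrix_apply_ne _ _ _ h, Matrix.algebraMap_matrix_apply, h]

lemma su_key {m : ℕ} (hm : 0 < m) (Y H : Matrix (Fin m) (Fin m) ℂ)
    (hY2 : Y * star Y = 1)
    (hdetY : Y.det = 1) (hdetH : H.det = 1)
    (hrel : H * Y = Y * Y * H) :
    ∃ N : ℕ, 0 < N ∧ Y ^ N = 1 := by
  classical
  set R := Y.charpoly.roots with hR
  have hmon : Y.charpoly.Monic := Matrix.charpoly_monic Y
  have hcp0 : Y.charpoly ≠ 0 := hmon.ne_zero
  set CC : ℂ →+* Matrix (Fin m) (Fin m) ℂ := algebraMap ℂ _ with hCC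
  -- squaring stays in the root set
  have hsq : ∀ μ ∈ R, μ * μ ∈ R := by
    intro μ hμ
    rw [hR, Polynomial.mem_roots'] at hμ ⊢
    refine ⟨hcp0, ?_⟩
    have hev : Y.charpoly.eval μ = 0 := hμ.2
    simp only [Polynomial.IsRoot.def, eval_charpoly'] at hev ⊢
    -- det (C(μμ) - Y) = det (C(μμ) - Y*Y) since H (C(μμ) - Y) = (C(μμ) - Y*Y) H
    have hcentral : ∀ (c : ℂ) (A : Matrix (Fin m) (Fin m) ℂ), CC c * A = A * CC c :=
      fun c A => (Algebra.commutes c A)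
    have e1 : H * (CC (μ * μ) - Y) = (CC (μ * μ) - Y * Y) * H := by
      rw [mul_sub, sub_mul, hrel, ← hcentral]
    have e2 : (CC (μ * μ) - Y).det = (CC (μ * μ) - Y * Y).det := by
      have := congrArg Matrix.det e1
      rwa [Matrix.det_mul, Matrix.det_mul, hdetH, one_mul, mul_one] at this
    have e3 : CC (μ * μ) - Y * Y = (CC μ + Y) * (CC μ - Y) := by
      have hcm : Commute (CC μ) Y := Algebra.commutes μ Y
      rw [← hcm.mul_self_sub_mul_self_eq, _root_.map_mul]
    rw [e2, e3, Matrix.det_mul, hev, mul_zero]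
  -- iterated squares
  have hiter : ∀ μ ∈ R, ∀ k : ℕ, μ ^ (2 ^ k) ∈ R := by
    intro μ hμ k
    induction k with
    | zero => simpa using hμ
    | succ k ih =>
      have : μ ^ (2 ^ (k+1)) = μ ^ (2 ^ k) * μ ^ (2 ^ k) := by
        rw [← pow_add]; congr 1; ring
      rw [this]
      exact hsq _ ih
  -- 0 is not a root
  have h0 : (0 : ℂ) ∉ R := by
    intro h0
    rw [hR, Polynomial.mem_roots'] at h0
    have := h0.2
    rw [Polynomial.IsRoot.def, eval_charpoly', map_zero, zero_sub, Matrix.det_neg, hdetY,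
      mul_one] at this
    exact (pow_ne_zero (Fintype.card (Fin m)) (by norm_num : (-1 : ℂ) ≠ 0)) this
  -- every root is a root of unity
  have hfin : ∀ μ ∈ R.toFinset, ∃ l : ℕ, 0 < l ∧ μ ^ l = 1 := by
    intro μ hμ
    rw [Multiset.mem_toFinset] at hμ
    have hμ0 : μ ≠ 0 := fun h => h0 (h ▸ hμ)
    have : ∀ k : ℕ, (⟨μ ^ (2 ^ k), Multiset.mem_toFinset.mpr (hiter μ hμ k)⟩ :
        {x // x ∈ R.toFinset}) = _ := fun k => rfl
    obtain ⟨a, b, hab, heq⟩ := Finite.exists_ne_map_eq_of_infinite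
      (fun k : ℕ => (⟨μ ^ (2 ^ k), Multiset.mem_toFinset.mpr (hiter μ hμ k)⟩ :
        {x // x ∈ R.toFinset}))
    have heq' : μ ^ (2 ^ a) = μ ^ (2 ^ b) := congrArg Subtype.val heq
    rcases Ne.lt_or_gt hab with hlt | hlt
    · refine ⟨2 ^ b - 2 ^ a, by have := Nat.pow_lt_pow_right (by norm_num : 1 < 2) hlt; omega, ?_⟩
      have : μ ^ (2 ^ a) * μ ^ (2 ^ b - 2 ^ a) = μ ^ (2 ^ a) * 1 := by
        rw [← pow_add, mul_one]
        rw [heq']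
        congr 1
        have := Nat.pow_lt_pow_right (by norm_num : 1 < 2) hlt
        omega
      exact mul_left_cancel₀ (pow_ne_zero _ hμ0) this
    · refine ⟨2 ^ a - 2 ^ b, by have := Nat.pow_lt_pow_right (by norm_num : 1 < 2) hlt; omega, ?_⟩
      have : μ ^ (2 ^ b) * μ ^ (2 ^ a - 2 ^ b) = μ ^ (2 ^ b) * 1 := by
        rw [← pow_add, mul_one, ← heq']
        congr 1
        have := Nat.pow_lt_pow_right (by norm_num : 1 < 2) hlt
        omega
      exact mul_left_cancel₀ (pow_ne_zero _ hμ0) this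
  -- common exponent
  choose f hf0 hf1 using hfin
  set N : ℕ := ∏ μ ∈ R.toFinset.attach, f μ.1 μ.2 with hN
  have hN0 : 0 < N := Finset.prod_pos (fun μ _ => hf0 μ.1 μ.2)
  have hNroot : ∀ μ ∈ R, μ ^ N = 1 := by
    intro μ hμ
    have hμ' : μ ∈ R.toFinset := Multiset.mem_toFinset.mpr hμ
    obtain ⟨c, hc⟩ : f μ hμ' ∣ N :=
      Finset.dvd_prod_of_mem _ (Finset.mem_attach _ (⟨μ, hμ'⟩ : {x // x ∈ R.toFinset}))
    rw [hc, pow_mul, hf1 μ hμ', one_pow]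
  -- charpoly divides (X^N - 1)^m
  set q : ℂ[X] := X ^ N - 1 with hq
  have hqmon : q.Monic := by
    simpa [hq] using Polynomial.monic_X_pow_sub_C (1 : ℂ) hN0.ne'
  have hq0 : q ≠ 0 := hqmon.ne_zero
  have hdvd : Y.charpoly ∣ q ^ m := by
    apply Polynomial.Splits.dvd_of_roots_le_roots (IsAlgClosed.splits _) hcp0
    rw [Polynomial.roots_pow]
    rw [Multiset.le_iff_count]
    intro a
    rw [Multiset.count_nsmul]
    by_cases ha : a ∈ R
    · have h1 : R.count a ≤ m := by
        calc R.count a ≤ Multiset.card R := Multiset.count_le_card _ _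
        _ ≤ Y.charpoly.natDegree := Polynomial.card_roots' _
        _ = m := by simp [Matrix.charpoly_natDegree_eq_dim]
      have h2 : 1 ≤ q.roots.count a := by
        rw [Multiset.one_le_count_iff_mem, Polynomial.mem_roots']
        exact ⟨hq0, by simp [hq, Polynomial.IsRoot, hNroot a ha]⟩
      calc R.count a ≤ m := h1
      _ = m * 1 := (mul_one m).symm
      _ ≤ m * q.roots.count a := Nat.mul_le_mul_left m h2
    · rw [Multiset.count_eq_zero_of_notMem ha]
      exact Nat.zero_le _
  -- Cayley-Hamilton
  have hnil : (Y ^ N - 1) ^ m = 0 := by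
    obtain ⟨c, hc⟩ := hdvd
    have := congrArg (Polynomial.aeval Y) hc
    rw [_root_.map_mul, Matrix.aeval_self_charpoly, zero_mul] at this
    simpa [hq, map_pow, map_sub, _root_.map_one] using this
  -- normality
  have hcomm : Commute Y (star Y) := by
    unfold Commute SemiconjBy
    rw [hY2, mul_eq_one_comm.mp hY2]
  have hMnormal : Commute (Y ^ N - 1) (star (Y ^ N - 1)) := by
    have : star (Y ^ N - 1) = (star Y) ^ N - 1 := by
      rw [star_sub, star_one, star_pow]
    rw [this]
    exact ((hcomm.pow_pow N N).sub_left (Commute.one_left _)).sub_right (Commute.one_right _)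
  have hzero : Y ^ N - 1 = 0 := normal_nilpotent_eq_zero hMnormal hm hnil
  exact ⟨N, hN0, by rwa [sub_eq_zero] at hzero⟩

set_option synthInstance.maxHeartbeats 1000000 in
set_option maxHeartbeats 1000000 in
/-- For every integer `n ≥ 3`, there is no group isomorphism between `SU(n, ℂ)` and
`SL(n, ℂ)`: they are not isomorphic as abstract groups. -/
theorem stmt_14 (n : ℕ) (hn : 3 ≤ n) :
    IsEmpty (Matrix.specialUnitaryGroup (Fin n) ℂ ≃* Matrix.SpecialLinearGroup (Fin n) ℂ) := by
  constructor
  intro φ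
  classical
  set i0 : Fin n := ⟨0, by omega⟩ with hi0
  set i1 : Fin n := ⟨1, by omega⟩ with hi1
  set i2 : Fin n := ⟨2, by omega⟩ with hi2
  have h01 : i0 ≠ i1 := by simp [hi0, hi1, Fin.ext_iff]
  have h10 : i1 ≠ i0 := h01.symm
  have h12 : i1 ≠ i2 := by simp [hi1, hi2, Fin.ext_iff]
  have h20 : i2 ≠ i0 := by simp [hi2, hi0, Fin.ext_iff]
  set E : Matrix (Fin n) (Fin n) ℂ := Matrix.single i0 i1 1 with hE
  have hEE : E * E = 0 := Matrix.single_mul_single_of_ne (c := 1) i0 i1 i0 h10 1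
  set X' : Matrix (Fin n) (Fin n) ℂ := 1 + E with hX'
  have htri : X'.BlockTriangular id := by
    intro i j hij
    have hne : i ≠ j := ne_of_gt hij
    have hEij : E i j = 0 := by
      apply Matrix.single_apply_of_ne
      rintro ⟨rfl, rfl⟩
      simp only [hi0, hi1, id] at hij
      exact absurd hij (by simp [Fin.lt_def])
    simp [hX', Matrix.one_apply_ne hne, hEij]
  have hEdiag : ∀ i : Fin n, E i i = 0 := by
    intro i
    apply Matrix.single_apply_of_ne
    rintro ⟨rfl, h⟩
    exact h01 h.symm
  have hXdet : X'.det = 1 := by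
    rw [Matrix.det_of_upperTriangular htri]
    apply Finset.prod_eq_one
    intro i _
    simp [hX', hEdiag i, Matrix.one_apply]
  set d : Fin n → ℂ := fun i => if i = i0 then 2 else if i = i2 then 2⁻¹ else 1 with hd
  set G' : Matrix (Fin n) (Fin n) ℂ := Matrix.diagonal d with hG'
  have hGdet : G'.det = 1 := by
    rw [hG', Matrix.det_diagonal]
    rw [← Finset.mul_prod_erase Finset.univ d (Finset.mem_univ i0)]
    rw [← Finset.mul_prod_erase _ d (Finset.mem_erase.mpr ⟨h20, Finset.mem_univ i2⟩)]
    have hrest : ∏ i ∈ (Finset.univ.erase i0).erase i2, d i = 1 := by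
      apply Finset.prod_eq_one
      intro i hi
      rw [Finset.mem_erase, Finset.mem_erase] at hi
      simp [hd, hi.1, hi.2.1]
    rw [hrest]
    simp [hd, h20]
  have hpow : ∀ k : ℕ, X' ^ k = 1 + (k : ℂ) • E := by
    intro k
    induction k with
    | zero => simp
    | succ k ih =>
      rw [pow_succ, ih]
      have hcast : ((k + 1 : ℕ) : ℂ) = (k : ℂ) + 1 := by push_cast; ring
      rw [hcast, add_smul, one_smul]
      simp only [hX', mul_add, add_mul, mul_one, one_mul, smul_mul_assoc, hEE, smul_zero,
        add_zero]
      abel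
  have hXX : X' * X' = 1 + (2 : ℂ) • E := by
    have := hpow 2
    rw [pow_two] at this
    simpa using this
  have hrelmat : G' * X' = X' * X' * G' := by
    rw [hXX, hG', hX']
    ext i j
    rw [Matrix.diagonal_mul, Matrix.mul_diagonal]
    by_cases hij : i = i0 ∧ j = i1
    · obtain ⟨rfl, rfl⟩ := hij
      simp [Matrix.one_apply_ne h01, hE, Matrix.single_apply_same, hd, h10, h12,
        Matrix.smul_apply]
    · have hEij : E i j = 0 := by
        apply Matrix.single_apply_of_ne
        rintro ⟨rfl, rfl⟩
        exact hij ⟨rfl, rfl⟩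
      simp only [Matrix.add_apply, Matrix.smul_apply, hEij, smul_zero, add_zero]
      by_cases hij' : i = j
      · subst hij'; simp [Matrix.one_apply]
      · simp [Matrix.one_apply_ne hij']
  -- special linear group elements
  set x' : Matrix.SpecialLinearGroup (Fin n) ℂ := ⟨X', hXdet⟩ with hx'
  set g' : Matrix.SpecialLinearGroup (Fin n) ℂ := ⟨G', hGdet⟩ with hg'
  have hrelSL : g' * x' = x' * x' * g' := Subtype.ext hrelmat
  set y := φ.symm x' with hy
  set h := φ.symm g' with hh
  have hrelSU : h * y = y * y * h := by
    apply φ.injective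
    simp only [_root_.map_mul, hy, hh, MulEquiv.apply_symm_apply]
    exact hrelSL
  -- matrix level in SU
  have hymem := y.2
  have hhmem := h.2
  rw [Matrix.mem_specialUnitaryGroup_iff] at hymem hhmem
  have hY2 : (y : Matrix (Fin n) (Fin n) ℂ) * star (y : Matrix (Fin n) (Fin n) ℂ) = 1 :=
    hymem.1.2
  have hdetY : (y : Matrix (Fin n) (Fin n) ℂ).det = 1 := hymem.2
  have hdetH : (h : Matrix (Fin n) (Fin n) ℂ).det = 1 := hhmem.2
  have hrelmatSU : (h : Matrix (Fin n) (Fin n) ℂ) * y =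
      ((y : Matrix (Fin n) (Fin n) ℂ) * y) * h := congrArg Subtype.val hrelSU
  obtain ⟨N, hN0, hYN⟩ := su_key (by omega) _ _ hY2 hdetY hdetH hrelmatSU
  have hyN : y ^ N = 1 := by
    apply Subtype.ext
    rw [SubmonoidClass.coe_pow]
    exact hYN
  have hxN : x' ^ N = 1 := by
    have := congrArg φ hyN
    rwa [map_pow, hy, MulEquiv.apply_symm_apply, _root_.map_one] at this
  have hXN : X' ^ N = 1 := by
    have := congrArg (Subtype.val) hxN
    rwa [Matrix.SpecialLinearGroup.coe_pow] at this
  rw [hpow N] at hXN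
  have hentry := congrArg (fun M : Matrix (Fin n) (Fin n) ℂ => M i0 i1) hXN
  simp only [Matrix.add_apply, Matrix.smul_apply, hE, Matrix.single_apply_same,
    Matrix.one_apply_ne h01, smul_eq_mul, mul_one, zero_add] at hentry
  exact absurd (Nat.cast_eq_zero.mp hentry) (by omega)
end
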